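/- Let N ≥ 1, let d > 0, let h_0, …, h_{N−1} be real numbers, and let f = Σ_{i=0}^{N−1} h_i · 𝟙_{[a + i·d, a + (i+1)·d)}. Then for every integer k with 0 ≤ k ≤ 2N−2, the autoconvolution satisfies (f*f)(2a + (k+1)·d) = d · Σ_{i+j=k} h_i h_j, where the sum runs over pairs of indices 0 ≤ i, j ≤ N−1 with i + j = k. -/

import Mathlib

open MeasureTheory

/-- The autoconvolution `(f*f)(x) = ∫ f(t) f(x−t) dt`. -/
noncomputable def autoconv (f : ℝ → ℝ) : ℝ → ℝ := fun x => ∫ t, f t * f (x - t)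

lemma vol_inter (l u r s : ℝ) :
    volume (Set.Ico l u ∩ Set.Ioc r s) = ENNReal.ofReal (min u s - max l r) := by
  apply le_antisymm
  · calc volume (Set.Ico l u ∩ Set.Ioc r s)
        ≤ volume (Set.Icc (max l r) (min u s)) := by
          apply measure_mono
          rintro x ⟨⟨h1, h2⟩, h3, h4⟩
          exact ⟨max_le h1 h3.le, le_min h2.le h4⟩
      _ = ENNReal.ofReal (min u s - max l r) := Real.volume_Icc
  · calc ENNReal.ofReal (min u s - max l r)
        = volume (Set.Ioo (max l r) (min u s)) := Real.volume_Ioo.symm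
      _ ≤ volume (Set.Ico l u ∩ Set.Ioc r s) := by
          apply measure_mono
          rintro x ⟨h1, h2⟩
          rw [max_lt_iff] at h1; rw [lt_min_iff] at h2
          exact ⟨⟨h1.1.le, h2.1⟩, h1.2, h2.2.le⟩

lemma indicator_sub_arg (c e x t : ℝ) :
    Set.indicator (Set.Ico c e) (fun _ => (1 : ℝ)) (x - t)
      = Set.indicator (Set.Ioc (x - e) (x - c)) (fun _ => (1 : ℝ)) t := by
  have hmem : x - t ∈ Set.Ico c e ↔ t ∈ Set.Ioc (x - e) (x - c) := by
    simp only [Set.mem_Ico, Set.mem_Ioc]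
    constructor <;> rintro ⟨h1, h2⟩ <;> constructor <;> linarith
  by_cases ht : t ∈ Set.Ioc (x - e) (x - c)
  · rw [Set.indicator_of_mem (hmem.2 ht), Set.indicator_of_mem ht]
  · rw [Set.indicator_of_notMem (fun hc => ht (hmem.1 hc)), Set.indicator_of_notMem ht]

/-- For a step function with heights `h` on `N` equally spaced intervals of
width `d`, the autoconvolution at the node `2a + (k+1)d` equals `d` times the `k`-th entry
of the discrete autoconvolution of `h`. -/
theorem autoconv_step_node (N : ℕ) (hN : 1 ≤ N) (a d : ℝ) (hd : 0 < d)
    (h : Fin N → ℝ) (f : ℝ → ℝ)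
    (hf : f = fun x => ∑ i : Fin N,
      h i * Set.indicator (Set.Ico (a + (i : ℕ) * d) (a + ((i : ℕ) + 1) * d))
        (fun _ => (1 : ℝ)) x)
    (k : ℕ) (hk : k ≤ 2 * N - 2) :
    autoconv f (2 * a + ((k : ℝ) + 1) * d) =
      d * ∑ p ∈ Finset.univ.filter
        (fun p : Fin N × Fin N => (p.1 : ℕ) + (p.2 : ℕ) = k), h p.1 * h p.2 := by
  subst hf
  set x : ℝ := 2 * a + ((k : ℝ) + 1) * d with hx
  -- the intersection sets
  set S : Fin N → Fin N → Set ℝ := fun i j =>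
    Set.Ico (a + (i : ℕ) * d) (a + ((i : ℕ) + 1) * d) ∩
      Set.Ioc (x - (a + ((j : ℕ) + 1) * d)) (x - (a + (j : ℕ) * d)) with hS
  have hSmeas : ∀ i j, MeasurableSet (S i j) := fun i j =>
    measurableSet_Ico.inter measurableSet_Ioc
  -- pointwise rewriting of the integrand
  have hpt : ∀ t : ℝ,
      (∑ i : Fin N, h i * Set.indicator (Set.Ico (a + (i : ℕ) * d) (a + ((i : ℕ) + 1) * d))
          (fun _ => (1 : ℝ)) t) *
      (∑ j : Fin N, h j * Set.indicator (Set.Ico (a + (j : ℕ) * d) (a + ((j : ℕ) + 1) * d))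
          (fun _ => (1 : ℝ)) (x - t))
      = ∑ i : Fin N, ∑ j : Fin N, Set.indicator (S i j) (fun _ => h i * h j) t := by
    intro t
    rw [Finset.sum_mul_sum]
    refine Finset.sum_congr rfl fun i _ => Finset.sum_congr rfl fun j _ => ?_
    rw [indicator_sub_arg]
    have := Set.inter_indicator_mul
      (fun _ : ℝ => (1 : ℝ)) (fun _ : ℝ => (1 : ℝ))
      (s := Set.Ico (a + (i : ℕ) * d) (a + ((i : ℕ) + 1) * d))
      (t := Set.Ioc (x - (a + ((j : ℕ) + 1) * d)) (x - (a + (j : ℕ) * d))) t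
    have hind : Set.indicator (S i j) (fun _ => h i * h j) t
        = (h i * h j) * Set.indicator (S i j) (fun _ => (1 : ℝ)) t := by
      simp [Set.indicator_apply, mul_ite]
    rw [hind, hS]
    simp only [one_mul] at this
    rw [this]
    ring
  -- the volume of each intersection
  have hvol : ∀ i j : Fin N, (volume (S i j)).toReal =
      if (i : ℕ) + (j : ℕ) = k then d else 0 := by
    intro i j
    have hx1 : x - (a + ((j : ℕ) + 1) * d) = a + ((k : ℝ) - (j : ℕ)) * d := by
      rw [hx]; ring
    have hx2 : x - (a + (j : ℕ) * d) = a + (((k : ℝ) - (j : ℕ)) + 1) * d := by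
      rw [hx]; ring
    rw [hS]
    simp only [hx1, hx2]
    rw [vol_inter]
    by_cases hij : (i : ℕ) + (j : ℕ) = k
    · have hcast : (k : ℝ) - (j : ℕ) = (i : ℕ) := by
        have := hij; push_cast [← this]; ring
      rw [hcast, if_pos hij]
      have : min (a + ((i : ℕ) + 1) * d) (a + ((i : ℕ) + 1) * d)
          - max (a + (i : ℕ) * d) (a + (i : ℕ) * d) = d := by
        rw [min_self, max_self]; ring
      rw [this, ENNReal.toReal_ofReal hd.le]
    · rw [if_neg hij]
      have hz : (1 : ℝ) ≤ |(i : ℝ) - ((k : ℝ) - (j : ℕ))| := by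
        have hzz : ((i : ℤ) + (j : ℤ) - (k : ℤ)) ≠ 0 := by
          intro hc
          apply hij
          omega
        have h1 : (1 : ℤ) ≤ |(i : ℤ) + (j : ℤ) - (k : ℤ)| := Int.one_le_abs hzz
        have : ((i : ℝ) - ((k : ℝ) - (j : ℕ))) = (((i : ℤ) + (j : ℤ) - (k : ℤ) : ℤ) : ℝ) := by
          push_cast; ring
        rw [this, ← Int.cast_abs]
        exact_mod_cast h1
      have hle : min (a + ((i : ℕ) + 1) * d) (a + (((k : ℝ) - (j : ℕ)) + 1) * d)
          - max (a + (i : ℕ) * d) (a + ((k : ℝ) - (j : ℕ)) * d) ≤ 0 := by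
        rcases abs_cases ((i : ℝ) - ((k : ℝ) - (j : ℕ))) with ⟨habs, _⟩ | ⟨habs, _⟩ <;>
          rw [habs] at hz
        · have := min_le_right (a + ((i : ℕ) + 1) * d) (a + (((k : ℝ) - (j : ℕ)) + 1) * d)
          have := le_max_left (a + (i : ℕ) * d) (a + ((k : ℝ) - (j : ℕ)) * d)
          nlinarith
        · have := min_le_left (a + ((i : ℕ) + 1) * d) (a + (((k : ℝ) - (j : ℕ)) + 1) * d)
          have := le_max_right (a + (i : ℕ) * d) (a + ((k : ℝ) - (j : ℕ)) * d)
          nlinarith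
      rw [ENNReal.ofReal_eq_zero.2 hle, ENNReal.toReal_zero]
  -- integrability of each piece
  have hint : ∀ i j : Fin N, Integrable (Set.indicator (S i j) (fun _ => h i * h j)) := by
    intro i j
    rw [integrable_indicator_iff (hSmeas i j)]
    apply (integrableOn_const_iff (C := h i * h j)).2
    right
    calc volume (S i j) ≤ volume (Set.Ico (a + (i : ℕ) * d) (a + ((i : ℕ) + 1) * d)) :=
          measure_mono Set.inter_subset_left
      _ < ⊤ := by rw [Real.volume_Ico]; exact ENNReal.ofReal_lt_top
  -- compute the integral
  rw [autoconv]
  simp only [hpt]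
  rw [integral_finset_sum _ fun i _ => integrable_finset_sum _ fun j _ => hint i j]
  have hterm : ∀ i j : Fin N, ∫ t, Set.indicator (S i j) (fun _ => h i * h j) t
      = if (i : ℕ) + (j : ℕ) = k then h i * h j * d else 0 := by
    intro i j
    rw [integral_indicator (hSmeas i j), setIntegral_const, smul_eq_mul,
      mul_comm, measureReal_def, hvol i j]
    by_cases hij : (i : ℕ) + (j : ℕ) = k <;> simp [hij]
  calc ∑ i : Fin N, ∫ t, (∑ j : Fin N, Set.indicator (S i j) (fun _ => h i * h j) t)
      = ∑ i : Fin N, ∑ j : Fin N,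
          if (i : ℕ) + (j : ℕ) = k then h i * h j * d else 0 := by
        refine Finset.sum_congr rfl fun i _ => ?_
        rw [integral_finset_sum _ fun j _ => hint i j]
        exact Finset.sum_congr rfl fun j _ => hterm i j
    _ = ∑ p : Fin N × Fin N,
          if (p.1 : ℕ) + (p.2 : ℕ) = k then h p.1 * h p.2 * d else 0 := by
        rw [← Finset.sum_product']
        rfl
    _ = d * ∑ p ∈ Finset.univ.filter
          (fun p : Fin N × Fin N => (p.1 : ℕ) + (p.2 : ℕ) = k), h p.1 * h p.2 := by
        rw [Finset.mul_sum, Finset.sum_filter]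
        exact Finset.sum_congr rfl fun p _ => by
          by_cases hp : (p.1 : ℕ) + (p.2 : ℕ) = k <;> simp [hp] <;> ring
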